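/- For each 1 ≤ m ≤ j − i, the commutator [e_2, E_m] lies in span{E_{t,u} : t = (r,s), u = (r',s'), s = s'}, i.e. in the degree-zero component of the grading of gl(ℂ^B) in which the matrix unit E_{(r,s),(r',s')} has degree 2(s − s') (the column grading of the right-aligned pyramid). -/

import Mathlib

open Matrix

/-- The boxes of the right-aligned Young diagram of `μ` (0-based: box `⟨r, s⟩`
corresponds to the box in row `r+1`, `s+1`-th from the right end of its row). -/
abbrev Box (k : ℕ) (μ : Fin k → ℕ) := (r : Fin k) × Fin (μ r)

/-- The nilpotent `e₁` of Jordan type `μ`, sending `b_{r,s} ↦ b_{r,s+1}`. -/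
noncomputable def e1 (k : ℕ) (μ : Fin k → ℕ) : Matrix (Box k μ) (Box k μ) ℂ :=
  Matrix.of fun t u => if t.1 = u.1 ∧ t.2.val = u.2.val + 1 then 1 else 0

/-- The nilpotent `e₂ = e₁ + Σ_{s=1}^{μ_j} E_{(i,s),(j,s)}`. -/
noncomputable def e2 (k : ℕ) (μ : Fin k → ℕ) (i j : Fin k) : Matrix (Box k μ) (Box k μ) ℂ :=
  e1 k μ + Matrix.of fun t u => if t.1 = i ∧ u.1 = j ∧ t.2.val = u.2.val then 1 else 0

/-- `E_m := Σ_{r=i}^{j−m} Σ_{s=1}^{μ_{r+m}} E_{(r+m,s),(r,s)}`. -/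
noncomputable def Em (k : ℕ) (μ : Fin k → ℕ) (i j : Fin k) (m : ℕ) :
    Matrix (Box k μ) (Box k μ) ℂ :=
  Matrix.of fun t u =>
    if i ≤ u.1 ∧ t.1 ≤ j ∧ t.1.val = u.1.val + m ∧ t.2.val = u.2.val then 1 else 0

/-- `m₁ := span{E_{t,u} : s_t < s_u}`. -/
noncomputable def m1 (k : ℕ) (μ : Fin k → ℕ) : Submodule ℂ (Matrix (Box k μ) (Box k μ) ℂ) :=
  Submodule.span ℂ
    {x | ∃ t u : Box k μ, t.2.val < u.2.val ∧ x = Matrix.single t u 1}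

/-- `k := span{E_1, …, E_{j−i}}`. -/
noncomputable def fk (k : ℕ) (μ : Fin k → ℕ) (i j : Fin k) :
    Submodule ℂ (Matrix (Box k μ) (Box k μ) ℂ) :=
  Submodule.span ℂ {x | ∃ m : ℕ, 1 ≤ m ∧ m ≤ j.val - i.val ∧ x = Em k μ i j m}

/-- `m₂ := m₁ + k`. -/
noncomputable def m2 (k : ℕ) (μ : Fin k → ℕ) (i j : Fin k) :
    Submodule ℂ (Matrix (Box k μ) (Box k μ) ℂ) :=
  m1 k μ ⊔ fk k μ i j

/-- The covering partition `λ`. -/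
def lam (k : ℕ) (μ : Fin k → ℕ) (i j : Fin k) : Fin k → ℕ :=
  fun r => if r = i then μ i + 1 else if r = j then μ j - 1 else μ r

/-- `χ_a(x) = Tr(e_a x)`. -/
noncomputable def chi (k : ℕ) (μ : Fin k → ℕ) (ea x : Matrix (Box k μ) (Box k μ) ℂ) : ℂ :=
  (ea * x).trace


/-- Auxiliary: the extra part of `e₂`. -/
noncomputable def Fm (k : ℕ) (μ : Fin k → ℕ) (i j : Fin k) : Matrix (Box k μ) (Box k μ) ℂ :=
  Matrix.of fun t u => if t.1 = i ∧ u.1 = j ∧ t.2.val = u.2.val then 1 else 0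

lemma e2_eq_add (k : ℕ) (μ : Fin k → ℕ) (i j : Fin k) :
    e2 k μ i j = e1 k μ + Fm k μ i j := rfl

lemma mem_span_of_deg0 (k : ℕ) (μ : Fin k → ℕ) (X : Matrix (Box k μ) (Box k μ) ℂ)
    (h : ∀ t u, X t u ≠ 0 → t.2.val = u.2.val) :
    X ∈ Submodule.span ℂ
      {x | ∃ t u : Box k μ, t.2.val = u.2.val ∧ x = Matrix.single t u 1} := by
  rw [Matrix.matrix_eq_sum_single X]
  refine Submodule.sum_mem _ fun t _ => Submodule.sum_mem _ fun u _ => ?_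
  by_cases h0 : X t u = 0
  · simp [h0]
  · have : Matrix.single t u (X t u) = X t u • Matrix.single t u 1 := by
      rw [Matrix.smul_single, smul_eq_mul, mul_one]
    rw [this]
    exact Submodule.smul_mem _ _ (Submodule.subset_span ⟨t, u, h t u h0, rfl⟩)

lemma e1_mul_Em (k : ℕ) (μ : Fin k → ℕ) (i j : Fin k) (m : ℕ) (t u : Box k μ) :
    (e1 k μ * Em k μ i j m) t u =
      if i ≤ u.1 ∧ t.1 ≤ j ∧ t.1.val = u.1.val + m ∧ t.2.val = u.2.val + 1 then 1 else 0 := by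
  rw [Matrix.mul_apply]
  split_ifs with h
  · obtain ⟨h1, h2, h3, h4⟩ := h
    have hu : u.2.val < μ t.1 := by have := t.2.isLt; omega
    rw [Fintype.sum_eq_single (⟨t.1, ⟨u.2.val, hu⟩⟩ : Box k μ)]
    · simp [e1, Em, h1, h2, h3, h4]
    · rintro ⟨r, s⟩ hv
      rcases eq_or_ne t.1 r with hr | hr
      · subst hr
        rcases eq_or_ne (s : ℕ) (u.2 : ℕ) with hs | hs
        · exact absurd (congrArg (Sigma.mk t.1) (Fin.ext hs)) hv
        · exact mul_eq_zero_of_right _ (by simp [Em, hs])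
      · exact mul_eq_zero_of_left (by simp [e1, hr]) _
  · refine Finset.sum_eq_zero fun v _ => ?_
    obtain ⟨r, s⟩ := v
    simp only [e1, Em, Matrix.of_apply]
    split_ifs with p q
    · exfalso
      obtain ⟨p1, p2⟩ := p
      obtain ⟨q1, q2, q3, q4⟩ := q
      exact h ⟨q1, p1 ▸ q2, by rw [p1]; omega, by omega⟩
    all_goals ring

lemma Em_mul_e1 (k : ℕ) (μ : Fin k → ℕ) (hanti : Antitone μ) (i j : Fin k) (m : ℕ)
    (t u : Box k μ) :
    (Em k μ i j m * e1 k μ) t u =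
      if i ≤ u.1 ∧ t.1 ≤ j ∧ t.1.val = u.1.val + m ∧ t.2.val = u.2.val + 1 then 1 else 0 := by
  rw [Matrix.mul_apply]
  split_ifs with h
  · obtain ⟨h1, h2, h3, h4⟩ := h
    have hle : u.1 ≤ t.1 := by rw [Fin.le_def]; omega
    have hmono := hanti hle
    have hu : u.2.val + 1 < μ u.1 := by have := t.2.isLt; omega
    rw [Fintype.sum_eq_single (⟨u.1, ⟨u.2.val + 1, hu⟩⟩ : Box k μ)]
    · simp [e1, Em, h1, h2, h3, h4]
    · rintro ⟨r, s⟩ hv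
      rcases eq_or_ne u.1 r with hr | hr
      · subst hr
        rcases eq_or_ne (s : ℕ) (u.2.val + 1) with hs | hs
        · exact absurd (congrArg (Sigma.mk u.1) (Fin.ext hs)) hv
        · exact mul_eq_zero_of_left (by simp [Em]; intro _ _ _; omega) _
      · exact mul_eq_zero_of_right _ (by simp [e1]; intro h'; exact absurd h'.symm hr)
  · refine Finset.sum_eq_zero fun v _ => ?_
    obtain ⟨r, s⟩ := v
    simp only [e1, Em, Matrix.of_apply]
    split_ifs with p q
    · exfalso
      obtain ⟨p1, p2, p3, p4⟩ := p
      obtain ⟨q1, q2⟩ := q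
      have hr : (r : ℕ) = (u.1 : ℕ) := congrArg Fin.val q1
      exact h ⟨q1 ▸ p1, p2, by omega, by omega⟩
    all_goals ring

lemma Fm_mul_Em (k : ℕ) (μ : Fin k → ℕ) (i j : Fin k) (m : ℕ) (t u : Box k μ)
    (hne : t.2.val ≠ u.2.val) : (Fm k μ i j * Em k μ i j m) t u = 0 := by
  rw [Matrix.mul_apply]
  refine Finset.sum_eq_zero fun v _ => ?_
  simp only [Fm, Em, Matrix.of_apply]
  split_ifs with p q
  · exact absurd (p.2.2.trans q.2.2.2) hne
  all_goals ring

lemma Em_mul_Fm (k : ℕ) (μ : Fin k → ℕ) (i j : Fin k) (m : ℕ) (t u : Box k μ)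
    (hne : t.2.val ≠ u.2.val) : (Em k μ i j m * Fm k μ i j) t u = 0 := by
  rw [Matrix.mul_apply]
  refine Finset.sum_eq_zero fun v _ => ?_
  simp only [Fm, Em, Matrix.of_apply]
  split_ifs with p q
  · exact absurd (p.2.2.2.trans q.2.2) hne
  all_goals ring

/-- For `1 ≤ m ≤ j − i`, the commutator `[e₂, E_m]` lies in the
degree-zero component of the column grading, i.e. in `span{E_{t,u} : s_t = s_u}`. -/
theorem stmt12
    (k : ℕ) (n : ℕ) (μ : Fin k → ℕ)
    (hpos : ∀ r, 0 < μ r) (hanti : Antitone μ)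
    (hn : ∑ r : Fin k, μ r = n)
    (i j : Fin k) (hij : i < j)
    (hi : ∀ r, r < i → μ i < μ r)
    (hj : ∀ r, j < r → μ r < μ j)
    (hcase : (j : ℕ) = (i : ℕ) + 1 ∨ μ i = μ j)
    (m : ℕ) (hm1 : 1 ≤ m) (hm2 : m ≤ j.val - i.val) :
    e2 k μ i j * Em k μ i j m - Em k μ i j m * e2 k μ i j ∈
      Submodule.span ℂ
        {x | ∃ t u : Box k μ, t.2.val = u.2.val ∧ x = Matrix.single t u 1} := by
  apply mem_span_of_deg0
  intro t u h
  by_contra hne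
  apply h
  have hA := e1_mul_Em k μ i j m t u
  have hB := Em_mul_e1 k μ hanti i j m t u
  have hC := Fm_mul_Em k μ i j m t u hne
  have hD := Em_mul_Fm k μ i j m t u hne
  rw [e2_eq_add, Matrix.add_mul, Matrix.mul_add, Matrix.sub_apply, Matrix.add_apply,
    Matrix.add_apply, hA, hB, hC, hD]
  ring
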